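/- Let d ≥ 1, ε ∈ [0, 1/2], and for τ ∈ {−1,+1}^d let D_τ be the probability distribution on [d] × {−1,+1} that picks i uniformly from [d] and then picks the label +1 with probability 1/2 + τ_i·ε and −1 with probability 1/2 − τ_i·ε. If τ, τ' ∈ {−1,+1}^d differ in exactly one coordinate, then the squared Hellinger distance satisfies H²(D_τ, D_{τ'}) ≤ (8/d)·ε². -/
import Mathlib

lemma hellinger_aux (a b ε : ℝ) (ha : 0 ≤ a) (hb : 0 ≤ b) (hab : a + b = 1)
    (habd : (a - b) ^ 2 = 4 * ε ^ 2) :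
    (Real.sqrt a - Real.sqrt b) ^ 2 ≤ 8 * ε ^ 2 := by
  have hsa := Real.sq_sqrt ha
  have hsb := Real.sq_sqrt hb
  have hsa0 := Real.sqrt_nonneg a
  have hsb0 := Real.sqrt_nonneg b
  nlinarith [mul_nonneg hsa0 hsb0, sq_nonneg (Real.sqrt a * Real.sqrt b),
    sq_nonneg (2 * Real.sqrt a * Real.sqrt b - (1 - 8 * ε ^ 2)),
    sq_nonneg (Real.sqrt a + Real.sqrt b), sq_nonneg ε]

/-- Per-pair squared Hellinger distance bound in Assouad's construction: if `τ, τ'` are sign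
vectors differing in exactly one coordinate, and `D_τ` is the distribution on `[d] × {±1}`
picking `i` uniformly and then label `+1` with probability `1/2 + τᵢ ε`, then
`H²(D_τ, D_τ') ≤ (8/d) ε²`. -/
theorem hellinger_assouad (d : ℕ) (hd : 1 ≤ d) (ε : ℝ) (hε0 : 0 ≤ ε) (hε : ε ≤ 1 / 2)
    (τ τ' : Fin d → ℝ) (hτ : ∀ i, τ i = 1 ∨ τ i = -1) (hτ' : ∀ i, τ' i = 1 ∨ τ' i = -1)
    (hdiff : ∃ j, τ j ≠ τ' j ∧ ∀ i, i ≠ j → τ i = τ' i) :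
    (1 / 2) * ∑ z : Fin d × Bool,
        (Real.sqrt ((1 / (d : ℝ)) * (if z.2 then 1 / 2 + τ z.1 * ε else 1 / 2 - τ z.1 * ε)) -
          Real.sqrt ((1 / (d : ℝ)) * (if z.2 then 1 / 2 + τ' z.1 * ε else 1 / 2 - τ' z.1 * ε))) ^ 2
      ≤ (8 / (d : ℝ)) * ε ^ 2 := by
  obtain ⟨j, hjne, hji⟩ := hdiff
  have hd0 : (0 : ℝ) < d := by exact_mod_cast Nat.lt_of_lt_of_le Nat.zero_lt_one hd
  have hc0 : (0 : ℝ) ≤ 1 / (d : ℝ) := by positivity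
  rw [Fintype.sum_prod_type, Finset.sum_eq_single j]
  · rw [Fintype.sum_bool]
    simp only [if_true, Bool.false_eq_true, if_false]
    have hτ'j : τ' j = -τ j := by
      rcases hτ j with h1 | h1 <;> rcases hτ' j with h2 | h2 <;>
        simp_all
    rw [hτ'j]
    have e1 : 1 / 2 + -τ j * ε = 1 / 2 - τ j * ε := by ring
    have e2 : 1 / 2 - -τ j * ε = 1 / 2 + τ j * ε := by ring
    rw [e1, e2]
    set a := 1 / 2 + τ j * ε with ha_def
    set b := 1 / 2 - τ j * ε with hb_def
    have hτj2 : (τ j) ^ 2 = 1 := by rcases hτ j with h | h <;> rw [h] <;> ring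
    have hτjabs : -1 ≤ τ j ∧ τ j ≤ 1 := by rcases hτ j with h | h <;> rw [h] <;> norm_num
    have ha : 0 ≤ a := by rw [ha_def]; rcases hτ j with h | h <;> rw [h] <;> linarith
    have hb : 0 ≤ b := by rw [hb_def]; rcases hτ j with h | h <;> rw [h] <;> linarith
    have hab : a + b = 1 := by rw [ha_def, hb_def]; ring
    have habd : (a - b) ^ 2 = 4 * ε ^ 2 := by
      rw [ha_def, hb_def]; nlinarith [hτj2]
    have key := hellinger_aux a b ε ha hb hab habd
    rw [Real.sqrt_mul hc0, Real.sqrt_mul hc0]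
    have hsq : Real.sqrt (1 / (d : ℝ)) ^ 2 = 1 / (d : ℝ) := Real.sq_sqrt hc0
    have expand :
        (Real.sqrt (1 / (d : ℝ)) * Real.sqrt a - Real.sqrt (1 / (d : ℝ)) * Real.sqrt b) ^ 2
          + (Real.sqrt (1 / (d : ℝ)) * Real.sqrt b - Real.sqrt (1 / (d : ℝ)) * Real.sqrt a) ^ 2
          = 2 * (1 / (d : ℝ)) * (Real.sqrt a - Real.sqrt b) ^ 2 := by
      have : (Real.sqrt (1 / (d : ℝ)) * Real.sqrt a - Real.sqrt (1 / (d : ℝ)) * Real.sqrt b) ^ 2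
          = Real.sqrt (1 / (d : ℝ)) ^ 2 * (Real.sqrt a - Real.sqrt b) ^ 2 := by ring
      nlinarith [hsq]
    rw [expand]
    have h2 := mul_le_mul_of_nonneg_left key hc0
    calc (1:ℝ) / 2 * (2 * (1 / (d:ℝ)) * (Real.sqrt a - Real.sqrt b) ^ 2)
        = 1 / (d:ℝ) * (Real.sqrt a - Real.sqrt b) ^ 2 := by ring
      _ ≤ 1 / (d:ℝ) * (8 * ε ^ 2) := h2
      _ = 8 / (d:ℝ) * ε ^ 2 := by ring
  · intro i _ hij
    have h := hji i hij
    simp [h]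
  · intro h; exact absurd (Finset.mem_univ j) h
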